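/- Fix d ≤ n and a conjugacy class C ⊆ GL_d(F_q). For T chosen uniformly from GL_n(F_q), the expected number of d-dimensional subspaces W ≤ F_q^n with T(W) = W and T|_W lying in C (after identifying W with F_q^d via any linear isomorphism) equals |C| / |GL_d(F_q)|; in particular this expectation is independent of n for n ≥ d. -/

import Mathlib

open Matrix

set_option linter.unusedSectionVars false
set_option linter.unusedVariables false
set_option linter.unusedTactic false
set_option maxHeartbeats 1000000


/-- `T|_W` lies in the conjugacy class `C ⊆ GL d F`: there is a linear isomorphism
`ι : F^d → W ≤ F^n` intertwining some `S ∈ C` with `T`. -/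
def restrictsToClass (F : Type) [Field F] {d n : ℕ} (C : ConjClasses (GL (Fin d) F))
    (T : GL (Fin n) F) (W : Submodule F (Fin n → F)) : Prop :=
  ∃ ι : (Fin d → F) →ₗ[F] (Fin n → F), Function.Injective ι ∧ LinearMap.range ι = W ∧
    ∃ S : GL (Fin d) F, S ∈ C.carrier ∧
      ∀ v : Fin d → F, (T : Matrix (Fin n) (Fin n) F).mulVec (ι v) =
        ι ((S : Matrix (Fin d) (Fin d) F).mulVec v)

namespace Stmt2Aux

variable {F : Type} [Field F] [Fintype F] [DecidableEq F] {k d n : ℕ}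

instance : Finite ((Fin d → F) →ₗ[F] (Fin n → F)) := DFunLike.finite _

/-- GL element from a linear automorphism of `Fin k → F`. -/
noncomputable def glOf (e : (Fin k → F) ≃ₗ[F] (Fin k → F)) : GL (Fin k) F where
  val := LinearMap.toMatrix' (e : (Fin k → F) →ₗ[F] (Fin k → F))
  inv := LinearMap.toMatrix' (e.symm : (Fin k → F) →ₗ[F] (Fin k → F))
  val_inv := by
    rw [← LinearMap.toMatrix'_comp]
    have : (e : (Fin k → F) →ₗ[F] (Fin k → F)) ∘ₗ (e.symm : (Fin k → F) →ₗ[F] (Fin k → F))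
        = LinearMap.id := by ext v; simp
    rw [this, LinearMap.toMatrix'_id]
  inv_val := by
    rw [← LinearMap.toMatrix'_comp]
    have : (e.symm : (Fin k → F) →ₗ[F] (Fin k → F)) ∘ₗ (e : (Fin k → F) →ₗ[F] (Fin k → F))
        = LinearMap.id := by ext v; simp
    rw [this, LinearMap.toMatrix'_id]

lemma glOf_mulVec (e : (Fin k → F) ≃ₗ[F] (Fin k → F)) (v : Fin k → F) :
    (glOf e : Matrix (Fin k) (Fin k) F).mulVec v = e v := by
  show (LinearMap.toMatrix' (e : (Fin k → F) →ₗ[F] (Fin k → F))).mulVec v = e v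
  rw [← Matrix.toLin'_apply, Matrix.toLin'_toMatrix']
  rfl

lemma gl_ext {g g' : GL (Fin k) F}
    (h : ∀ v, (g : Matrix (Fin k) (Fin k) F).mulVec v = (g' : Matrix (Fin k) (Fin k) F).mulVec v) :
    g = g' := by
  apply Units.ext
  refine Matrix.toLin'.injective (LinearMap.ext fun v => ?_)
  simpa [Matrix.toLin'_apply] using h v

lemma inv_mulVec_mulVec (g : GL (Fin k) F) (v : Fin k → F) :
    ((g⁻¹ : GL (Fin k) F) : Matrix (Fin k) (Fin k) F).mulVec
      ((g : Matrix (Fin k) (Fin k) F).mulVec v) = v := by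
  rw [Matrix.mulVec_mulVec, ← Units.val_mul, inv_mul_cancel]
  simp

lemma mulVec_inv_mulVec (g : GL (Fin k) F) (v : Fin k → F) :
    (g : Matrix (Fin k) (Fin k) F).mulVec
      (((g⁻¹ : GL (Fin k) F) : Matrix (Fin k) (Fin k) F).mulVec v) = v := by
  rw [Matrix.mulVec_mulVec, ← Units.val_mul, mul_inv_cancel]
  simp

lemma gl_mulVec_injective (g : GL (Fin k) F) :
    Function.Injective fun v => (g : Matrix (Fin k) (Fin k) F).mulVec v := by
  intro v w h
  have h2 := congrArg (fun u => ((g⁻¹ : GL (Fin k) F) : Matrix (Fin k) (Fin k) F).mulVec u) h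
  simp only at h2
  rwa [inv_mulVec_mulVec, inv_mulVec_mulVec] at h2

/-- standard inclusion F^d → F^n -/
def incl (hdn : d ≤ n) : (Fin d → F) →ₗ[F] (Fin n → F) where
  toFun v := fun j => if h : (j : ℕ) < d then v ⟨j, h⟩ else 0
  map_add' v w := by ext j; by_cases h : (j : ℕ) < d <;> simp [h]
  map_smul' c v := by ext j; by_cases h : (j : ℕ) < d <;> simp [h]

lemma incl_injective (hdn : d ≤ n) : Function.Injective (incl (F := F) hdn) := by
  intro v w h
  ext i
  have := congrFun h ⟨(i : ℕ), lt_of_lt_of_le i.2 hdn⟩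
  simpa [incl, i.2] using this

lemma exists_extend (hdn : d ≤ n) (ι : (Fin d → F) →ₗ[F] (Fin n → F))
    (hι : Function.Injective ι) :
    ∃ A : GL (Fin n) F, ∀ v, (A : Matrix (Fin n) (Fin n) F).mulVec (incl hdn v) = ι v := by
  obtain ⟨U₀, hU₀⟩ := Submodule.exists_isCompl (LinearMap.range (incl (F := F) hdn))
  obtain ⟨U₁, hU₁⟩ := Submodule.exists_isCompl (LinearMap.range ι)
  have hr0 : Module.finrank F (LinearMap.range (incl (F := F) hdn)) = d := by
    rw [LinearMap.finrank_range_of_inj (incl_injective hdn), Module.finrank_fin_fun]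
  have hr1 : Module.finrank F (LinearMap.range ι) = d := by
    rw [LinearMap.finrank_range_of_inj hι, Module.finrank_fin_fun]
  have h0 := Submodule.finrank_add_eq_of_isCompl hU₀
  have h1 := Submodule.finrank_add_eq_of_isCompl hU₁
  rw [hr0] at h0
  rw [hr1] at h1
  have hU : Module.finrank F U₀ = Module.finrank F U₁ := by omega
  let f : U₀ ≃ₗ[F] U₁ := LinearEquiv.ofFinrankEq _ _ hU
  let e₀ := LinearEquiv.ofInjective (incl (F := F) hdn) (incl_injective hdn)
  let e₁ := LinearEquiv.ofInjective ι hι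
  let E : (Fin n → F) ≃ₗ[F] (Fin n → F) :=
    (Submodule.prodEquivOfIsCompl _ _ hU₀).symm.trans
      (((e₀.symm.trans e₁).prodCongr f).trans (Submodule.prodEquivOfIsCompl _ _ hU₁))
  refine ⟨glOf E, fun v => ?_⟩
  rw [glOf_mulVec]
  show (Submodule.prodEquivOfIsCompl _ _ hU₁)
      (((e₀.symm.trans e₁).prodCongr f) ((Submodule.prodEquivOfIsCompl _ _ hU₀).symm (incl hdn v)))
    = ι v
  have h2 : (Submodule.prodEquivOfIsCompl _ _ hU₀).symm (incl hdn v)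
      = ((⟨incl hdn v, LinearMap.mem_range_self _ v⟩ : LinearMap.range (incl (F := F) hdn)), 0) :=
    Submodule.prodEquivOfIsCompl_symm_apply_left _ _ hU₀ ⟨incl hdn v, LinearMap.mem_range_self _ v⟩
  rw [h2]
  have h3 : e₀.symm ⟨incl hdn v, LinearMap.mem_range_self _ v⟩ = v := by
    apply e₀.injective
    rw [e₀.apply_symm_apply]
    exact Subtype.ext (by simp [e₀, LinearEquiv.ofInjective_apply])
  show (Submodule.prodEquivOfIsCompl _ _ hU₁)
      (e₁ (e₀.symm ⟨incl hdn v, LinearMap.mem_range_self _ v⟩), f 0) = ι v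
  rw [h3, show f 0 = 0 from f.toLinearMap.map_zero]
  rw [Submodule.coe_prodEquivOfIsCompl']
  simp [e₁, LinearEquiv.ofInjective_apply]

lemma mulVec_mul (a b : GL (Fin k) F) (v : Fin k → F) :
    ((a * b : GL (Fin k) F) : Matrix (Fin k) (Fin k) F).mulVec v
      = (a : Matrix (Fin k) (Fin k) F).mulVec ((b : Matrix (Fin k) (Fin k) F).mulVec v) := by
  rw [Units.val_mul, ← Matrix.mulVec_mulVec]

def Compat (T : GL (Fin n) F) (ι : (Fin d → F) →ₗ[F] (Fin n → F)) (S : GL (Fin d) F) : Prop :=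
  ∀ v : Fin d → F, (T : Matrix (Fin n) (Fin n) F).mulVec (ι v) =
    ι ((S : Matrix (Fin d) (Fin d) F).mulVec v)

lemma conj_mem {C : ConjClasses (GL (Fin d) F)} {S : GL (Fin d) F} (hS : S ∈ C.carrier)
    (g : GL (Fin d) F) : g⁻¹ * S * g ∈ C.carrier := by
  rw [ConjClasses.mem_carrier_iff_mk_eq] at hS ⊢
  rw [← hS]
  exact ConjClasses.mk_eq_mk_iff_isConj.mpr (isConj_iff.2 ⟨g, by group⟩)

/-- The number of `T` compatible with a fixed injective `ι` and `S` equals the cardinality of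
the stabilizer of the standard inclusion. -/
lemma card_compat_fiber (hdn : d ≤ n) (ι : (Fin d → F) →ₗ[F] (Fin n → F))
    (hι : Function.Injective ι) (S : GL (Fin d) F) :
    Nat.card {T : GL (Fin n) F // Compat T ι S}
      = Nat.card {T : GL (Fin n) F //
          ∀ v, (T : Matrix (Fin n) (Fin n) F).mulVec (incl hdn v) = incl hdn v} := by
  obtain ⟨A, hA⟩ := exists_extend hdn ι hι
  have hιS : Function.Injective (ι ∘ₗ Matrix.mulVecLin (S : Matrix (Fin d) (Fin d) F)) := by
    intro v w h
    simp only [LinearMap.comp_apply, Matrix.mulVecLin_apply] at h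
    exact gl_mulVec_injective S (hι h)
  obtain ⟨B, hB⟩ := exists_extend hdn _ hιS
  have hB' : ∀ v, (B : Matrix (Fin n) (Fin n) F).mulVec (incl hdn v)
      = ι ((S : Matrix (Fin d) (Fin d) F).mulVec v) := fun v => by
    simpa only [LinearMap.comp_apply, Matrix.mulVecLin_apply] using hB v
  apply Nat.card_eq_of_bijective (fun x => ⟨B⁻¹ * x.1 * A, by
    intro v
    rw [mulVec_mul, mulVec_mul, hA, x.2 v, ← hB', inv_mulVec_mulVec]⟩)
  constructor
  · intro x y h
    have h1 : B⁻¹ * x.1 * A = B⁻¹ * y.1 * A := congrArg Subtype.val h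
    exact Subtype.ext (mul_left_cancel (mul_right_cancel h1))
  · rintro ⟨h, hh⟩
    refine ⟨⟨B * h * A⁻¹, fun v => ?_⟩, ?_⟩
    · rw [mulVec_mul, mulVec_mul]
      have h2 : ((A⁻¹ : GL (Fin n) F) : Matrix (Fin n) (Fin n) F).mulVec (ι v) = incl hdn v := by
        rw [← hA v, inv_mulVec_mulVec]
      rw [h2, hh v, hB']
    · apply Subtype.ext
      show B⁻¹ * (B * h * A⁻¹) * A = h
      group

lemma exists_extend_congr (hdn : d ≤ n) {ι ι' : (Fin d → F) →ₗ[F] (Fin n → F)} (e : ι = ι')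
    (hι : Function.Injective ι) (hι' : Function.Injective ι') :
    (exists_extend hdn ι hι).choose = (exists_extend hdn ι' hι').choose := by
  subst e; rfl

/-- Orbit–stabilizer for the action on injective maps. -/
lemma card_gl_eq (hdn : d ≤ n) :
    Nat.card (GL (Fin n) F)
      = Nat.card {ι : (Fin d → F) →ₗ[F] (Fin n → F) // Function.Injective ι}
        * Nat.card {T : GL (Fin n) F //
            ∀ v, (T : Matrix (Fin n) (Fin n) F).mulVec (incl hdn v) = incl hdn v} := by
  rw [← Nat.card_prod]
  have hinj : ∀ T : GL (Fin n) F,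
      Function.Injective (Matrix.mulVecLin (T : Matrix (Fin n) (Fin n) F) ∘ₗ incl hdn) := by
    intro T v w h
    simp only [LinearMap.comp_apply, Matrix.mulVecLin_apply] at h
    exact incl_injective hdn (gl_mulVec_injective T h)
  apply Nat.card_eq_of_bijective (fun T =>
    (⟨Matrix.mulVecLin (T : Matrix (Fin n) (Fin n) F) ∘ₗ incl hdn, hinj T⟩,
     ⟨(exists_extend hdn _ (hinj T)).choose⁻¹ * T, by
        intro v
        rw [mulVec_mul]
        have hspec := (exists_extend hdn _ (hinj T)).choose_spec v
        have h2 : (T : Matrix (Fin n) (Fin n) F).mulVec (incl hdn v)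
            = ((exists_extend hdn _ (hinj T)).choose : Matrix (Fin n) (Fin n) F).mulVec
                (incl hdn v) := by
          rw [hspec]
          simp [Matrix.mulVecLin_apply]
        rw [h2, inv_mulVec_mulVec]⟩))
  constructor
  · intro T T' h
    have h1 : Matrix.mulVecLin (T : Matrix (Fin n) (Fin n) F) ∘ₗ incl hdn
        = Matrix.mulVecLin (T' : Matrix (Fin n) (Fin n) F) ∘ₗ incl hdn :=
      congrArg Subtype.val (congrArg Prod.fst h)
    have h2 : (exists_extend hdn _ (hinj T)).choose⁻¹ * T
        = (exists_extend hdn _ (hinj T')).choose⁻¹ * T' :=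
      congrArg Subtype.val (congrArg Prod.snd h)
    rw [exists_extend_congr hdn h1 (hinj T) (hinj T')] at h2
    exact mul_left_cancel h2
  · rintro ⟨⟨ι, hι⟩, ⟨h, hh⟩⟩
    set A := (exists_extend hdn ι hι).choose with hAdef
    have hA := (exists_extend hdn ι hι).choose_spec
    refine ⟨A * h, ?_⟩
    have e1 : Matrix.mulVecLin ((A * h : GL (Fin n) F) : Matrix (Fin n) (Fin n) F) ∘ₗ incl hdn
        = ι := by
      apply LinearMap.ext
      intro v
      simp only [LinearMap.comp_apply, Matrix.mulVecLin_apply]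
      rw [mulVec_mul, hh v, hA v]
    refine Prod.ext (Subtype.ext e1) (Subtype.ext ?_)
    show (exists_extend hdn _ (hinj (A * h))).choose⁻¹ * (A * h) = h
    rw [exists_extend_congr hdn e1 (hinj (A * h)) hι, ← hAdef]
    group

def WSet (C : ConjClasses (GL (Fin d) F)) (T : GL (Fin n) F) : Set (Submodule F (Fin n → F)) :=
  {W : Submodule F (Fin n → F) |
    Module.finrank F W = d ∧
    (∀ v ∈ W, (T : Matrix (Fin n) (Fin n) F).mulVec v ∈ W) ∧
    restrictsToClass F C T W}

lemma card_pair_fiber (C : ConjClasses (GL (Fin d) F)) (T : GL (Fin n) F) :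
    Nat.card {p : ((Fin d → F) →ₗ[F] (Fin n → F)) × GL (Fin d) F //
        Function.Injective p.1 ∧ p.2 ∈ C.carrier ∧ Compat T p.1 p.2}
      = Fintype.card (GL (Fin d) F) * (WSet C T).ncard := by
  rw [← Nat.card_coe_set_eq, ← Nat.card_eq_fintype_card, ← Nat.card_prod]
  -- choice data for each W in WSet
  have hmem : ∀ x : ↥(WSet C T), restrictsToClass F C T (x : Submodule F (Fin n → F)) :=
    fun x => x.2.2.2
  let ι₀ : ↥(WSet C T) → ((Fin d → F) →ₗ[F] (Fin n → F)) := fun x => (hmem x).choose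
  have hspec : ∀ x, Function.Injective (ι₀ x) ∧ LinearMap.range (ι₀ x) = (x : Submodule F (Fin n → F)) ∧
      ∃ S : GL (Fin d) F, S ∈ C.carrier ∧ Compat T (ι₀ x) S := fun x => (hmem x).choose_spec
  let S₀ : ↥(WSet C T) → GL (Fin d) F := fun x => (hspec x).2.2.choose
  have hS₀ : ∀ x, S₀ x ∈ C.carrier ∧ Compat T (ι₀ x) (S₀ x) := fun x => (hspec x).2.2.choose_spec
  symm
  apply Nat.card_eq_of_bijective (fun gx : GL (Fin d) F × ↥(WSet C T) =>
    ⟨(ι₀ gx.2 ∘ₗ Matrix.mulVecLin (gx.1 : Matrix (Fin d) (Fin d) F), gx.1⁻¹ * S₀ gx.2 * gx.1),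
      by
        refine ⟨?_, conj_mem (hS₀ gx.2).1 gx.1, ?_⟩
        · intro v w h
          simp only [LinearMap.comp_apply, Matrix.mulVecLin_apply] at h
          exact gl_mulVec_injective gx.1 ((hspec gx.2).1 h)
        · intro v
          simp only [LinearMap.comp_apply, Matrix.mulVecLin_apply]
          rw [(hS₀ gx.2).2]
          congr 1
          rw [Matrix.mulVec_mulVec, Matrix.mulVec_mulVec, ← Units.val_mul, ← Units.val_mul]
          congr 2
          group⟩)
  constructor
  · rintro ⟨g, x⟩ ⟨g', x'⟩ h
    have h1 : ι₀ x ∘ₗ Matrix.mulVecLin (g : Matrix (Fin d) (Fin d) F)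
        = ι₀ x' ∘ₗ Matrix.mulVecLin (g' : Matrix (Fin d) (Fin d) F) :=
      congrArg Prod.fst (congrArg Subtype.val h)
    have hrg : ∀ (y : ↥(WSet C T)) (u : GL (Fin d) F),
        LinearMap.range (ι₀ y ∘ₗ Matrix.mulVecLin (u : Matrix (Fin d) (Fin d) F))
          = (y : Submodule F (Fin n → F)) := by
      intro y u
      rw [LinearMap.range_comp_of_range_eq_top, (hspec y).2.1]
      rw [LinearMap.range_eq_top]
      intro w
      exact ⟨((u⁻¹ : GL (Fin d) F) : Matrix (Fin d) (Fin d) F).mulVec w, mulVec_inv_mulVec u w⟩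
    have hx : x = x' := by
      apply Subtype.ext
      rw [← hrg x g, ← hrg x' g', h1]
    subst hx
    have hg : g = g' := by
      apply gl_ext
      intro v
      have := congrArg (fun (f : (Fin d → F) →ₗ[F] (Fin n → F)) => f v) h1
      simp only [LinearMap.comp_apply, Matrix.mulVecLin_apply] at this
      exact (hspec x).1 this
    rw [hg]
  · rintro ⟨⟨ι, S⟩, ⟨hinj, hSC, hcomp⟩⟩
    have hW : LinearMap.range ι ∈ WSet C T := by
      refine ⟨?_, ?_, ι, hinj, rfl, S, hSC, hcomp⟩
      · rw [LinearMap.finrank_range_of_inj hinj, Module.finrank_fin_fun]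
      · rintro v ⟨u, rfl⟩
        rw [hcomp u]
        exact LinearMap.mem_range_self _ _
    set x : ↥(WSet C T) := ⟨LinearMap.range ι, hW⟩ with hxdef
    have hrange : LinearMap.range (ι₀ x) = LinearMap.range ι := (hspec x).2.1
    let e₀ : (Fin d → F) ≃ₗ[F] LinearMap.range (ι₀ x) :=
      LinearEquiv.ofInjective (ι₀ x) (hspec x).1
    let q : (Fin d → F) ≃ₗ[F] (Fin d → F) :=
      (LinearEquiv.ofInjective ι hinj).trans
        ((LinearEquiv.ofEq _ _ hrange.symm).trans e₀.symm)
    have hq : ∀ v, ι₀ x (q v) = ι v := by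
      intro v
      have h1 : ι₀ x (q v) = (e₀ (q v) : Fin n → F) := by
        rw [LinearEquiv.ofInjective_apply]
      rw [h1]
      show ((e₀ (e₀.symm ((LinearEquiv.ofEq _ _ hrange.symm)
        ((LinearEquiv.ofInjective ι hinj) v)))) : Fin n → F) = ι v
      rw [e₀.apply_symm_apply]
      rfl
    refine ⟨(glOf q, x), ?_⟩
    have e1 : ι₀ x ∘ₗ Matrix.mulVecLin ((glOf q : GL (Fin d) F) : Matrix (Fin d) (Fin d) F)
        = ι := by
      apply LinearMap.ext
      intro v
      simp only [LinearMap.comp_apply, Matrix.mulVecLin_apply]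
      rw [glOf_mulVec, hq]
    have e2 : (glOf q)⁻¹ * S₀ x * glOf q = S := by
      have hgs : S₀ x * glOf q = glOf q * S := by
        apply gl_ext
        intro v
        rw [mulVec_mul, mulVec_mul]
        apply (hspec x).1
        rw [glOf_mulVec, glOf_mulVec, hq]
        calc ι₀ x (((S₀ x : GL (Fin d) F) : Matrix (Fin d) (Fin d) F).mulVec (q v))
            = (T : Matrix (Fin n) (Fin n) F).mulVec (ι₀ x (q v)) := ((hS₀ x).2 (q v)).symm
          _ = (T : Matrix (Fin n) (Fin n) F).mulVec (ι v) := by rw [hq]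
          _ = ι ((S : Matrix (Fin d) (Fin d) F).mulVec v) := hcomp v
      rw [mul_assoc, hgs, ← mul_assoc, inv_mul_cancel, one_mul]
    exact Subtype.ext (Prod.ext e1 e2)

lemma nat_card_sigma {α : Type} [Fintype α] (β : α → Type) [∀ a, Finite (β a)] :
    Nat.card (Σ a, β a) = ∑ a, Nat.card (β a) := by
  letI : ∀ a, Fintype (β a) := fun a => Fintype.ofFinite _
  simp only [Nat.card_eq_fintype_card]
  exact Fintype.card_sigma

lemma key_count (hdn : d ≤ n) (C : ConjClasses (GL (Fin d) F)) :
    Fintype.card (GL (Fin d) F) * ∑ T : GL (Fin n) F, (WSet C T).ncard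
      = C.carrier.ncard * Fintype.card (GL (Fin n) F) := by
  classical
  haveI : Finite ((Fin d → F) →ₗ[F] (Fin n → F)) := DFunLike.finite _
  haveI : ∀ T : GL (Fin n) F, Finite {p : ((Fin d → F) →ₗ[F] (Fin n → F)) × GL (Fin d) F //
      Function.Injective p.1 ∧ p.2 ∈ C.carrier ∧ Compat T p.1 p.2} := fun T => by
    infer_instance
  have step1 : Fintype.card (GL (Fin d) F) * ∑ T : GL (Fin n) F, (WSet C T).ncard
      = ∑ T : GL (Fin n) F, Nat.card {p : ((Fin d → F) →ₗ[F] (Fin n → F)) × GL (Fin d) F //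
          Function.Injective p.1 ∧ p.2 ∈ C.carrier ∧ Compat T p.1 p.2} := by
    rw [Finset.mul_sum]
    exact Finset.sum_congr rfl fun T _ => (card_pair_fiber C T).symm
  rw [step1, ← nat_card_sigma]
  -- reorganize the sigma type
  let E1 : (Σ T : GL (Fin n) F, {p : ((Fin d → F) →ₗ[F] (Fin n → F)) × GL (Fin d) F //
        Function.Injective p.1 ∧ p.2 ∈ C.carrier ∧ Compat T p.1 p.2})
      ≃ (Σ q : {p : ((Fin d → F) →ₗ[F] (Fin n → F)) × GL (Fin d) F //
            Function.Injective p.1 ∧ p.2 ∈ C.carrier},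
          {T : GL (Fin n) F // Compat T q.1.1 q.1.2}) :=
    { toFun := fun x => ⟨⟨x.2.1, x.2.2.1, x.2.2.2.1⟩, ⟨x.1, x.2.2.2.2⟩⟩
      invFun := fun y => ⟨y.2.1, y.1.1, ⟨y.1.2.1, y.1.2.2, y.2.2⟩⟩
      left_inv := fun x => rfl
      right_inv := fun y => rfl }
  rw [Nat.card_congr E1]
  haveI : Finite {p : ((Fin d → F) →ₗ[F] (Fin n → F)) × GL (Fin d) F //
      Function.Injective p.1 ∧ p.2 ∈ C.carrier} := by infer_instance
  letI : Fintype {p : ((Fin d → F) →ₗ[F] (Fin n → F)) × GL (Fin d) F //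
      Function.Injective p.1 ∧ p.2 ∈ C.carrier} := Fintype.ofFinite _
  rw [nat_card_sigma]
  have step2 : ∀ q : {p : ((Fin d → F) →ₗ[F] (Fin n → F)) × GL (Fin d) F //
      Function.Injective p.1 ∧ p.2 ∈ C.carrier},
      Nat.card {T : GL (Fin n) F // Compat T q.1.1 q.1.2}
        = Nat.card {T : GL (Fin n) F //
            ∀ v, (T : Matrix (Fin n) (Fin n) F).mulVec (incl hdn v) = incl hdn v} :=
    fun q => card_compat_fiber hdn q.1.1 q.2.1 q.1.2
  rw [Finset.sum_congr rfl fun q _ => step2 q, Finset.sum_const, Finset.card_univ, smul_eq_mul]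
  have step3 : Fintype.card {p : ((Fin d → F) →ₗ[F] (Fin n → F)) × GL (Fin d) F //
      Function.Injective p.1 ∧ p.2 ∈ C.carrier}
      = Nat.card {ι : (Fin d → F) →ₗ[F] (Fin n → F) // Function.Injective ι}
        * C.carrier.ncard := by
    have e := Equiv.subtypeProdEquivProd
      (p := fun ι : (Fin d → F) →ₗ[F] (Fin n → F) => Function.Injective ι)
      (q := fun S : GL (Fin d) F => S ∈ C.carrier)
    rw [← Nat.card_eq_fintype_card, Nat.card_congr e, Nat.card_prod, ← Nat.card_coe_set_eq]
  rw [step3, ← Nat.card_coe_set_eq]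
  rw [← Nat.card_eq_fintype_card (α := GL (Fin n) F), card_gl_eq hdn]
  ring

end Stmt2Aux

/-- For a conjugacy class `C ⊆ GL d F` and `n ≥ d`, the expected number over uniform
`T ∈ GL n F` of `d`-dimensional `T`-invariant subspaces `W ≤ F^n` with `T|_W ∈ C`
equals `|C| / |GL d F|`; in particular it is independent of `n`. -/
theorem stmt2 (F : Type) [Field F] [Fintype F] [DecidableEq F] (d n : ℕ) (hdn : d ≤ n)
    (C : ConjClasses (GL (Fin d) F)) :
    (∑ T : GL (Fin n) F,
        (Set.ncard {W : Submodule F (Fin n → F) |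
            Module.finrank F W = d ∧
            (∀ v ∈ W, (T : Matrix (Fin n) (Fin n) F).mulVec v ∈ W) ∧
            restrictsToClass F C T W} : ℚ))
      / (Fintype.card (GL (Fin n) F) : ℚ)
    = (C.carrier.ncard : ℚ) / (Fintype.card (GL (Fin d) F) : ℚ) := by
  have hn : (Fintype.card (GL (Fin n) F) : ℚ) ≠ 0 := by
    exact_mod_cast Fintype.card_pos.ne'
  have hd : (Fintype.card (GL (Fin d) F) : ℚ) ≠ 0 := by
    exact_mod_cast Fintype.card_pos.ne'
  rw [div_eq_div_iff hn hd]
  have key := Stmt2Aux.key_count (F := F) hdn C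
  have hsets : ∀ T : GL (Fin n) F,
      {W : Submodule F (Fin n → F) |
            Module.finrank F W = d ∧
            (∀ v ∈ W, (T : Matrix (Fin n) (Fin n) F).mulVec v ∈ W) ∧
            restrictsToClass F C T W} = Stmt2Aux.WSet C T := fun T => rfl
  simp only [hsets]
  rw [← Nat.cast_sum]
  rw [← Nat.cast_mul, ← Nat.cast_mul]
  exact Nat.cast_inj.mpr (by rw [mul_comm]; exact key)
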